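/- Let C be a linear [n,k] code over F_q with generator matrix G (a k×n matrix over F_q whose rows span C), and for an integer t ≥ 1 let C_t = {xG : x ∈ F_{q^t}^k} be the linear [n,k] code over the extension field F_{q^t} generated by the same matrix G. Then for every r ∈ {1,...,k}, the r-th generalized Hamming weight of C equals the r-th generalized Hamming weight of C_t, i.e., d_r(C) = d_r(C_t). -/

import Mathlib

open Module Set

/-- The submodule of vectors supported inside `S`. -/
noncomputable def zc (K : Type*) [Field K] {n : ℕ} (S : Finset (Fin n)) :
    Submodule K (Fin n → K) :=
  LinearMap.ker (LinearMap.funLeft K K (Subtype.val : {i : Fin n // i ∉ S} → Fin n))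

lemma mem_zc {K : Type*} [Field K] {n : ℕ} {S : Finset (Fin n)} {x : Fin n → K} :
    x ∈ zc K S ↔ ∀ i ∉ S, x i = 0 := by
  simp [zc, LinearMap.funLeft, funext_iff, Subtype.forall]

lemma zc_top {K : Type*} [Field K] {n : ℕ} : zc K (Finset.univ : Finset (Fin n)) = ⊤ := by
  ext x; simp [mem_zc]

lemma exists_subcode {K V : Type*} [Field K] [AddCommGroup V] [Module K V]
    (W : Submodule K V) [FiniteDimensional K W] {r : ℕ} (hr : r ≤ Module.finrank K W) :
    ∃ D : Submodule K V, D ≤ W ∧ Module.finrank K D = r := by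
  have b := Module.finBasis K W
  set v : Fin r → V := fun i => (b (Fin.castLE hr i) : V) with hv
  have hli : LinearIndependent K v := by
    have h1 : LinearIndependent K (fun i : Fin r => b (Fin.castLE hr i)) :=
      b.linearIndependent.comp _ (Fin.castLE_injective hr)
    exact h1.map' W.subtype W.ker_subtype
  refine ⟨Submodule.span K (Set.range v), ?_, ?_⟩
  · rw [Submodule.span_le]; rintro _ ⟨i, rfl⟩; exact (b (Fin.castLE hr i)).2
  · rw [finrank_span_eq_card hli, Fintype.card_fin]

lemma li_extend {F E : Type*} [Field F] [Field E] [Algebra F E] {n ι : Type*}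
    {v : ι → (n → F)} (hv : LinearIndependent F v) :
    LinearIndependent E (fun i => (algebraMap F E) ∘ v i) := by
  rw [linearIndependent_iff'] at hv ⊢
  intro s g hg i hi
  set b := Basis.ofVectorSpace F E with hb
  have key : ∀ m, b.repr (g i) m = 0 := by
    intro m
    have h2 : ∑ j ∈ s, (fun j => b.repr (g j) m) j • v j = 0 := by
      funext x
      have h1 : ∑ j ∈ s, (v j x) • (g j) = 0 := by
        have := congrFun hg x
        simpa [Algebra.smul_def, mul_comm] using this
      have := congrArg (fun e => b.repr e m) h1
      simpa [map_sum, smul_eq_mul, mul_comm] using this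
    exact hv s _ h2 i hi
  have : b.repr (g i) = 0 := Finsupp.ext key
  simpa using congrArg b.repr.symm this

lemma finrank_span_map {F E : Type*} [Field F] [Field E] [Algebra F E] {n k : Type*}
    [Fintype n] [Fintype k] (M : Matrix k n F) :
    Module.finrank E ↥(Submodule.span E (Set.range (M.map (algebraMap F E)))) =
      Module.finrank F ↥(Submodule.span F (Set.range M)) := by
  obtain ⟨b, hbsub, hbspan, hbind⟩ := exists_linearIndependent F (Set.range M)
  have hbfin : b.Finite := (Set.finite_range M).subset hbsub
  haveI : Fintype b := hbfin.fintype
  set T : (n → F) →ₗ[F] (n → E) := (Algebra.linearMap F E).compLeft n with hT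
  have hTapp : ∀ x : n → F, T x = (algebraMap F E) ∘ x := fun x => rfl
  have hli : LinearIndependent E (fun x : b => T (x : n → F)) := by
    have := li_extend (E := E) hbind
    simpa [hTapp] using this
  have hR : Module.finrank F ↥(Submodule.span F (Set.range M)) = Fintype.card b := by
    rw [← hbspan, finrank_span_set_eq_card hbind, Set.toFinset_card]
  have himg : Set.range (M.map (algebraMap F E)) = T '' (Set.range M) := by
    ext y
    constructor
    · rintro ⟨i, rfl⟩; exact ⟨M i, ⟨i, rfl⟩, rfl⟩
    · rintro ⟨x, ⟨i, rfl⟩, rfl⟩; exact ⟨i, rfl⟩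
  have hspan : Submodule.span E (Set.range (M.map (algebraMap F E)))
      = Submodule.span E (T '' b) := by
    rw [himg]
    apply le_antisymm
    · rw [Submodule.span_le]
      rintro _ ⟨x, hx, rfl⟩
      have hx' : x ∈ Submodule.span F b := by
        rw [hbspan]; exact Submodule.subset_span hx
      have : T x ∈ Submodule.map T (Submodule.span F b) := Submodule.mem_map_of_mem hx'
      rw [Submodule.map_span] at this
      have h2 : Submodule.span F (T '' b) ≤
          (Submodule.span E (T '' b)).restrictScalars F :=
        Submodule.span_le.2 (fun y hy => Submodule.subset_span hy)
      exact h2 this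
    · exact Submodule.span_mono (Set.image_mono hbsub)
  have hrange : T '' b = Set.range (fun x : b => T (x : n → F)) := by
    rw [← Set.image_eq_range]
  rw [hspan, hrange, finrank_span_eq_card hli, hR]

lemma dim_formula {K : Type*} [Field K] {n k : ℕ} (M : Matrix (Fin k) (Fin n) K)
    (S : Finset (Fin n)) :
    Module.finrank K ↥(LinearMap.range M.vecMulLinear ⊓ zc K S)
      + Module.finrank K
          ↥(LinearMap.range (M.submatrix id
              (Subtype.val : {i : Fin n // i ∉ S} → Fin n)).vecMulLinear)
      = Module.finrank K ↥(LinearMap.range M.vecMulLinear) := by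
  set ρ : (Fin n → K) →ₗ[K] ({i : Fin n // i ∉ S} → K) :=
    LinearMap.funLeft K K Subtype.val with hρ
  set C := LinearMap.range M.vecMulLinear with hC
  have hcomp : ρ.comp M.vecMulLinear
      = (M.submatrix id (Subtype.val : {i : Fin n // i ∉ S} → Fin n)).vecMulLinear := by
    apply LinearMap.ext; intro x; funext j
    simp [hρ, Matrix.vecMul, dotProduct, LinearMap.funLeft, Matrix.submatrix]
  have hrn := LinearMap.finrank_range_add_finrank_ker (ρ.domRestrict C)
  have h1 : LinearMap.range (ρ.domRestrict C) =
      LinearMap.range (M.submatrix id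
        (Subtype.val : {i : Fin n // i ∉ S} → Fin n)).vecMulLinear := by
    rw [LinearMap.range_domRestrict, hC, ← LinearMap.range_comp, hcomp]
  have h2 : Module.finrank K ↥(LinearMap.ker (ρ.domRestrict C))
      = Module.finrank K ↥(C ⊓ zc K S) := by
    have hk : LinearMap.ker ρ = zc K S := rfl
    rw [LinearMap.ker_domRestrict, hk,
      ← Submodule.finrank_map_subtype_eq C (Submodule.comap C.subtype (zc K S)),
      Submodule.map_comap_subtype]
  rw [h1, h2] at hrn
  omega

/-- The `r`-th generalized Hamming weight of a linear code: the minimal support size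
of an `r`-dimensional subcode. -/
noncomputable def GHW (F : Type*) [Field F] {ι : Type*} (C : Submodule F (ι → F))
    (r : ℕ) : ℕ :=
  sInf { w | ∃ D : Submodule F (ι → F), D ≤ C ∧ Module.finrank F D = r ∧
    { i | ∃ x ∈ D, x i ≠ 0 }.ncard = w }

lemma GHW_eq {K : Type*} [Field K] {n : ℕ} (C : Submodule K (Fin n → K)) {r : ℕ}
    (hrk : r ≤ Module.finrank K C) :
    GHW K C r = sInf { w | ∃ S : Finset (Fin n), S.card = w ∧
      r ≤ Module.finrank K ↥(C ⊓ zc K S) } := by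
  have hBne : { w | ∃ S : Finset (Fin n), S.card = w ∧
      r ≤ Module.finrank K ↥(C ⊓ zc K S) }.Nonempty := by
    refine ⟨(Finset.univ : Finset (Fin n)).card, Finset.univ, rfl, ?_⟩
    rw [zc_top, inf_top_eq]; exact hrk
  obtain ⟨D0, hD0C, hD0r⟩ := exists_subcode C hrk
  have hAne : { w | ∃ D : Submodule K (Fin n → K), D ≤ C ∧ Module.finrank K D = r ∧
      { i | ∃ x ∈ D, x i ≠ 0 }.ncard = w }.Nonempty :=
    ⟨_, D0, hD0C, hD0r, rfl⟩
  apply le_antisymm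
  · obtain ⟨S, hScard, hSr⟩ := Nat.sInf_mem hBne
    obtain ⟨D, hDle, hDr⟩ := exists_subcode (C ⊓ zc K S) hSr
    have hmem : { i | ∃ x ∈ D, x i ≠ 0 }.ncard ∈ { w | ∃ D : Submodule K (Fin n → K),
        D ≤ C ∧ Module.finrank K D = r ∧ { i | ∃ x ∈ D, x i ≠ 0 }.ncard = w } :=
      ⟨D, hDle.trans inf_le_left, hDr, rfl⟩
    have hsub : { i | ∃ x ∈ D, x i ≠ 0 } ⊆ (S : Set (Fin n)) := by
      intro i hi
      obtain ⟨x, hxD, hxi⟩ := hi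
      by_contra hiS
      exact hxi (mem_zc.1 ((hDle hxD).2) i hiS)
    calc GHW K C r ≤ { i | ∃ x ∈ D, x i ≠ 0 }.ncard := Nat.sInf_le hmem
      _ ≤ (S : Set (Fin n)).ncard := Set.ncard_le_ncard hsub S.finite_toSet
      _ = S.card := Set.ncard_coe_finset S
      _ ≤ sInf { w | ∃ S : Finset (Fin n), S.card = w ∧
          r ≤ Module.finrank K ↥(C ⊓ zc K S) } := le_of_eq hScard
  · obtain ⟨D, hDC, hDr, hDw⟩ := Nat.sInf_mem hAne
    have hfin : { i | ∃ x ∈ D, x i ≠ 0 }.Finite := Set.toFinite _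
    have hmemB : hfin.toFinset.card ∈ { w | ∃ S : Finset (Fin n), S.card = w ∧
        r ≤ Module.finrank K ↥(C ⊓ zc K S) } := by
      refine ⟨hfin.toFinset, rfl, ?_⟩
      have hle : D ≤ C ⊓ zc K hfin.toFinset := by
        refine le_inf hDC ?_
        intro x hx
        rw [mem_zc]
        intro i hi
        by_contra hxi
        exact hi (hfin.mem_toFinset.2 ⟨x, hx, hxi⟩)
      calc r = Module.finrank K D := hDr.symm
        _ ≤ _ := Submodule.finrank_mono hle
    have h1 := Nat.sInf_le hmemB
    have h2 : hfin.toFinset.card = GHW K C r :=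
      (Set.ncard_eq_toFinset_card _ hfin).symm.trans hDw
    exact h1.trans (le_of_eq h2)

/-- If `C` is an `[n,k]` code over `F_q` with generator matrix `G`, and `C_t` is the
`[n,k]` code over `F_{q^t}` generated by the same matrix `G` (i.e. `{xG : x ∈ F_{q^t}^k}`),
then the generalized Hamming weights of `C` and `C_t` coincide. -/
theorem stmt2 {F E : Type*} [Field F] [Fintype F] [Field E] [Fintype E] [Algebra F E]
    {q t n k : ℕ} (hq : Fintype.card F = q) (hE : Fintype.card E = q ^ t) (ht : 1 ≤ t)
    (G : Matrix (Fin k) (Fin n) F)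
    (C : Submodule F (Fin n → F)) (hC : C = Submodule.span F (Set.range G))
    (hdim : Module.finrank F C = k)
    (Ct : Submodule E (Fin n → E))
    (hCt : Ct = LinearMap.range (Matrix.vecMulLinear (G.map (algebraMap F E)))) :
    ∀ r, 1 ≤ r → r ≤ k → GHW F C r = GHW E Ct r := by
  intro r hr1 hrk
  have hCr : C = LinearMap.range G.vecMulLinear := by
    rw [hC, range_vecMulLinear]; rfl
  have hCtspan : Ct = Submodule.span E (Set.range (G.map (algebraMap F E))) := by
    rw [hCt, range_vecMulLinear]; rfl
  have hCtdim : Module.finrank E Ct = k := by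
    rw [hCtspan, finrank_span_map, ← hC, hdim]
  -- key: for every S the dimensions of the shortened codes agree
  have key : ∀ S : Finset (Fin n),
      Module.finrank F ↥(C ⊓ zc F S) = Module.finrank E ↥(Ct ⊓ zc E S) := by
    intro S
    have hF := dim_formula G S
    have hEE := dim_formula (G.map (algebraMap F E)) S
    rw [← hCr] at hF
    rw [← hCt] at hEE
    have hsub : Module.finrank E
        ↥(LinearMap.range ((G.map (algebraMap F E)).submatrix id
            (Subtype.val : {i : Fin n // i ∉ S} → Fin n)).vecMulLinear)
        = Module.finrank F
        ↥(LinearMap.range (G.submatrix id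
            (Subtype.val : {i : Fin n // i ∉ S} → Fin n)).vecMulLinear) := by
      rw [range_vecMulLinear, range_vecMulLinear, Matrix.submatrix_map]
      exact finrank_span_map _
    rw [hsub] at hEE
    rw [hdim] at hF
    rw [hCtdim] at hEE
    omega
  rw [GHW_eq C (hdim ▸ hrk), GHW_eq Ct (hCtdim ▸ hrk)]
  congr 1
  ext w
  constructor
  · rintro ⟨S, hS, hSr⟩; exact ⟨S, hS, by rw [← key S]; exact hSr⟩
  · rintro ⟨S, hS, hSr⟩; exact ⟨S, hS, by rw [key S]; exact hSr⟩
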